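/- In SL₂(L), the root group and the torus are self-centralizing on nontrivial elements: for every nonzero t ∈ L, the centralizer of a(t) in SL₂(L) equals A; and for every s ≠ 1 in the subgroup of Kˣ generated by L \ {0}, the centralizer of diag(s) in SL₂(L) equals T(L). -/

import Mathlib

set_option linter.unusedSectionVars false
set_option linter.unnecessarySeqFocus false
set_option linter.unreachableTactic false
set_option linter.unusedTactic false
set_option maxHeartbeats 1000000

open Matrix Pointwise

noncomputable section

variable {K : Type*} [Field K]

abbrev SL2 (K : Type*) [Field K] := Matrix.SpecialLinearGroup (Fin 2) K

/-- `a(t) = [[1,t],[0,1]]`. -/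
def aMat (t : K) : SL2 K :=
  ⟨!![1, t; 0, 1], by simp [Matrix.det_fin_two_of]⟩

/-- `b(t) = [[1,0],[t,1]]`. -/
def bMat (t : K) : SL2 K :=
  ⟨!![1, 0; t, 1], by simp [Matrix.det_fin_two_of]⟩

/-- `diag(s) = [[s,0],[0,s⁻¹]]`. -/
def diagMat (s : Kˣ) : SL2 K :=
  ⟨!![(s : K), 0; 0, ((s⁻¹ : Kˣ) : K)], by simp [Matrix.det_fin_two_of]⟩

/-- `w = [[0,1],[1,0]]`, in `SL₂` since `char K = 2`. -/
def wMat (K : Type*) [Field K] [CharP K 2] : SL2 K :=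
  ⟨!![0, 1; 1, 0], by simp [Matrix.det_fin_two_of, CharTwo.neg_eq]⟩

def setA (L : AddSubgroup K) : Set (SL2 K) := {g | ∃ t ∈ L, g = aMat t}

def setAop (L : AddSubgroup K) : Set (SL2 K) := {g | ∃ t ∈ L, g = bMat t}

/-- Timmesfeld's `SL₂(L)`. -/
def SL2L (L : AddSubgroup K) : Subgroup (SL2 K) := Subgroup.closure (setA L ∪ setAop L)

/-- The subgroup of `Kˣ` generated by the nonzero elements of `L`. -/
def Tgen (L : AddSubgroup K) : Subgroup Kˣ := Subgroup.closure {u : Kˣ | (u : K) ∈ L}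

def setTL (L : AddSubgroup K) : Set (SL2 K) := {g | ∃ s ∈ Tgen L, g = diagMat s}

def setTK (K : Type*) [Field K] : Set (SL2 K) := {g | ∃ s : Kˣ, g = diagMat s}

def setB (L : AddSubgroup K) : Set (SL2 K) := setTL L * setA L

/-! ### Auxiliary lemmas -/

section Aux

variable [CharP K 2]

lemma TF_two : (2:K) = 0 := by exact_mod_cast CharP.cast_eq_zero K 2

lemma TF_a_mul (u v : K) : aMat u * aMat v = aMat (u+v) := by
  ext i j; simp only [Matrix.SpecialLinearGroup.coe_mul]; fin_cases i <;> fin_cases j <;>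
    simp [aMat, Matrix.mul_apply, Fin.sum_univ_two] <;> ring

lemma TF_a_zero : (aMat 0 : SL2 K) = 1 := by
  ext i j; fin_cases i <;> fin_cases j <;> simp [aMat]

lemma TF_a_self (u : K) : aMat u * aMat u = 1 := by
  rw [TF_a_mul, CharTwo.add_self_eq_zero, TF_a_zero]

lemma TF_b_zero : (bMat 0 : SL2 K) = 1 := by
  ext i j; fin_cases i <;> fin_cases j <;> simp [bMat]

lemma TF_d_mul (s r : Kˣ) : diagMat s * diagMat r = (diagMat (s*r) : SL2 K) := by
  ext i j; simp only [Matrix.SpecialLinearGroup.coe_mul]; fin_cases i <;> fin_cases j <;>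
    simp [diagMat, Matrix.mul_apply, Fin.sum_univ_two] <;> ring

lemma TF_d_one : (diagMat 1 : SL2 K) = 1 := by
  ext i j; fin_cases i <;> fin_cases j <;> simp [diagMat]

lemma TF_d_inv (s : Kˣ) : (diagMat s)⁻¹ = (diagMat s⁻¹ : SL2 K) := by
  apply inv_eq_of_mul_eq_one_right
  rw [TF_d_mul]; simp [TF_d_one]

lemma TF_w_w : (wMat K) * (wMat K) = 1 := by
  ext i j; simp only [Matrix.SpecialLinearGroup.coe_mul]; fin_cases i <;> fin_cases j <;>
    simp [wMat, Matrix.mul_apply, Fin.sum_univ_two]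

lemma TF_w_a_w (v : K) : wMat K * aMat v * wMat K = bMat v := by
  ext i j; simp only [Matrix.SpecialLinearGroup.coe_mul]; fin_cases i <;> fin_cases j <;>
    simp [wMat, aMat, bMat, Matrix.mul_apply, Fin.sum_univ_two]

lemma TF_a_inj {u v : K} (h : (aMat u : SL2 K) = aMat v) : u = v := by
  have := congrArg (fun m : SL2 K => (m : Matrix (Fin 2) (Fin 2) K) 0 1) h
  simpa [aMat] using this

lemma TF_Ecoe (s : Kˣ) (u v : K) :
    ((diagMat s * aMat u * wMat K * aMat v : SL2 K) : Matrix (Fin 2) (Fin 2) K)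
      = !![(s:K)*u, (s:K)*u*v + (s:K); ((s⁻¹:Kˣ):K), ((s⁻¹:Kˣ):K)*v] := by
  ext i j; simp only [Matrix.SpecialLinearGroup.coe_mul]; fin_cases i <;> fin_cases j <;>
    simp [aMat, diagMat, wMat, Matrix.mul_apply, Fin.sum_univ_two] <;> ring

lemma TF_sq_one {x : K} (h : x^2 = 1) : x = 1 := by
  have h1 : (x + 1)^2 = 0 := by
    rw [CharTwo.add_sq, h]; simp [CharTwo.add_self_eq_zero]
  have h0 := pow_eq_zero_iff (n := 2) (by norm_num) |>.mp h1
  have : x = -1 := eq_neg_of_add_eq_zero_left h0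
  simpa [CharTwo.neg_eq] using this

lemma TF_n (t : K) (ht : t ≠ 0) :
    aMat t * bMat t⁻¹ * aMat t = wMat K * diagMat (Units.mk0 t ht)⁻¹ := by
  have h2 := TF_two (K := K)
  ext i j; simp only [Matrix.SpecialLinearGroup.coe_mul]; fin_cases i <;> fin_cases j <;>
    simp [aMat, bMat, diagMat, wMat, Matrix.mul_apply, Fin.sum_univ_two] <;>
    field_simp <;>
    first
      | linear_combination h2
      | exact Or.inl (by linear_combination h2)

lemma TF_w_decomp : (wMat K) = aMat 1 * bMat 1 * aMat 1 := by
  have h := TF_n (1:K) one_ne_zero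
  rw [inv_one] at h
  have h1 : (Units.mk0 (1:K) one_ne_zero)⁻¹ = 1 := by
    apply Units.ext; simp
  rw [h1, TF_d_one, mul_one] at h
  exact h.symm

lemma TF_b_decomp (t : K) (ht : t ≠ 0) :
    bMat t = aMat t⁻¹ * wMat K * diagMat (Units.mk0 t ht) * aMat t⁻¹ := by
  have hti : t⁻¹ ≠ 0 := inv_ne_zero ht
  have h := TF_n t⁻¹ hti
  rw [inv_inv] at h
  have hu : (Units.mk0 t⁻¹ hti)⁻¹ = Units.mk0 t ht := by
    apply Units.ext; simp
  rw [hu] at h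
  -- h : aMat t⁻¹ * bMat t * aMat t⁻¹ = wMat K * diagMat (Units.mk0 t ht)
  have := congrArg (fun g => aMat t⁻¹ * g * aMat t⁻¹) h
  calc bMat t = (aMat t⁻¹ * aMat t⁻¹) * bMat t * (aMat t⁻¹ * aMat t⁻¹) := by
        rw [TF_a_self, one_mul, mul_one]
    _ = aMat t⁻¹ * (aMat t⁻¹ * bMat t * aMat t⁻¹) * aMat t⁻¹ := by group
    _ = aMat t⁻¹ * (wMat K * diagMat (Units.mk0 t ht)) * aMat t⁻¹ := by rw [h]
    _ = aMat t⁻¹ * wMat K * diagMat (Units.mk0 t ht) * aMat t⁻¹ := by group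

/-! ### product-form equations, proven entrywise -/

lemma TF_E_Ba (s : Kˣ) (u x : K) :
    diagMat s * aMat u * aMat x = diagMat s * aMat (u+x) := by
  rw [mul_assoc, TF_a_mul]

lemma TF_E_Bd (s r : Kˣ) (u : K) :
    diagMat s * aMat u * diagMat r = diagMat (s*r) * aMat ((r:K)⁻¹^2 * u) := by
  ext i j; simp only [Matrix.SpecialLinearGroup.coe_mul]; fin_cases i <;> fin_cases j <;>
    simp [aMat, diagMat, Matrix.mul_apply, Fin.sum_univ_two] <;> field_simp <;> ring

lemma TF_E_aB (s : Kˣ) (u t : K) :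
    aMat t * (diagMat s * aMat u) = diagMat s * aMat ((s:K)⁻¹^2 * t + u) := by
  ext i j; simp only [Matrix.SpecialLinearGroup.coe_mul]; fin_cases i <;> fin_cases j <;>
    simp [aMat, diagMat, Matrix.mul_apply, Fin.sum_univ_two] <;> field_simp <;> ring

lemma TF_E_dB (s r : Kˣ) (u : K) :
    diagMat s * (diagMat r * aMat u) = diagMat (s*r) * aMat u := by
  rw [← mul_assoc, TF_d_mul]

lemma TF_E_Ea (s : Kˣ) (u v x : K) :
    diagMat s * aMat u * wMat K * aMat v * aMat x
      = diagMat s * aMat u * wMat K * aMat (v+x) := by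
  rw [mul_assoc _ (aMat v), TF_a_mul]

lemma TF_E_Ed (s r : Kˣ) (u v : K) :
    diagMat s * aMat u * wMat K * aMat v * diagMat r
      = diagMat (s*r⁻¹) * aMat ((r:K)^2 * u) * wMat K * aMat ((r:K)⁻¹^2 * v) := by
  ext i j; simp only [Matrix.SpecialLinearGroup.coe_mul]; fin_cases i <;> fin_cases j <;>
    simp [aMat, diagMat, wMat, Matrix.mul_apply, Fin.sum_univ_two] <;> field_simp <;> ring

lemma TF_E_aE (s : Kˣ) (u v t : K) :
    aMat t * (diagMat s * aMat u * wMat K * aMat v)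
      = diagMat s * aMat ((s:K)⁻¹^2 * t + u) * wMat K * aMat v := by
  ext i j; simp only [Matrix.SpecialLinearGroup.coe_mul]; fin_cases i <;> fin_cases j <;>
    simp [aMat, diagMat, wMat, Matrix.mul_apply, Fin.sum_univ_two] <;> field_simp <;> ring

lemma TF_E_dE (s r : Kˣ) (u v : K) :
    diagMat s * (diagMat r * aMat u * wMat K * aMat v)
      = diagMat (s*r) * aMat u * wMat K * aMat v := by
  simp only [← mul_assoc, TF_d_mul]

lemma TF_E_Ew0 (s : Kˣ) (u : K) :
    diagMat s * aMat u * wMat K * wMat K = diagMat s * aMat u := by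
  rw [mul_assoc, TF_w_w, mul_one]

lemma TF_w_d (s : Kˣ) : wMat K * diagMat s = diagMat s⁻¹ * wMat K := by
  ext i j; simp only [Matrix.SpecialLinearGroup.coe_mul]; fin_cases i <;> fin_cases j <;>
    simp [wMat, diagMat, Matrix.mul_apply, Fin.sum_univ_two]

lemma TF_a_d (x : K) (r : Kˣ) :
    aMat x * diagMat r = diagMat r * aMat ((r:K)⁻¹^2 * x) := by
  ext i j; simp only [Matrix.SpecialLinearGroup.coe_mul]; fin_cases i <;> fin_cases j <;>
    simp [aMat, diagMat, Matrix.mul_apply, Fin.sum_univ_two] <;> field_simp <;> ring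

lemma TF_E_Ew (s : Kˣ) (u v : K) (hv : v ≠ 0) :
    diagMat s * aMat u * wMat K * aMat v * wMat K
      = diagMat (s * (Units.mk0 v hv)⁻¹) * aMat (v^2*u + v) * wMat K * aMat v⁻¹ := by
  have hc : ((((Units.mk0 v hv)⁻¹ : Kˣ) : K))⁻¹^2 * (u + v⁻¹) = v^2*u + v := by
    simp only [Units.val_inv_eq_inv_val, Units.val_mk0, inv_inv]
    field_simp
  calc diagMat s * aMat u * wMat K * aMat v * wMat K
      = diagMat s * aMat u * (wMat K * aMat v * wMat K) := by group
    _ = diagMat s * aMat u * bMat v := by rw [TF_w_a_w]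
    _ = diagMat s * aMat u
          * (aMat v⁻¹ * wMat K * diagMat (Units.mk0 v hv) * aMat v⁻¹) := by
        rw [TF_b_decomp v hv]
    _ = (diagMat s * aMat u * aMat v⁻¹)
          * (wMat K * diagMat (Units.mk0 v hv)) * aMat v⁻¹ := by group
    _ = (diagMat s * aMat (u + v⁻¹))
          * (wMat K * diagMat (Units.mk0 v hv)) * aMat v⁻¹ := by rw [TF_E_Ba]
    _ = (diagMat s * aMat (u + v⁻¹))
          * (diagMat (Units.mk0 v hv)⁻¹ * wMat K) * aMat v⁻¹ := by rw [TF_w_d]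
    _ = diagMat s * (aMat (u + v⁻¹) * diagMat (Units.mk0 v hv)⁻¹)
          * wMat K * aMat v⁻¹ := by group
    _ = diagMat s * (diagMat (Units.mk0 v hv)⁻¹
          * aMat (((((Units.mk0 v hv)⁻¹ : Kˣ) : K))⁻¹^2 * (u + v⁻¹)))
          * wMat K * aMat v⁻¹ := by rw [TF_a_d]
    _ = diagMat (s * (Units.mk0 v hv)⁻¹)
          * aMat (((((Units.mk0 v hv)⁻¹ : Kˣ) : K))⁻¹^2 * (u + v⁻¹))
          * wMat K * aMat v⁻¹ := by rw [TF_E_dB]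
    _ = diagMat (s * (Units.mk0 v hv)⁻¹) * aMat (v^2*u + v) * wMat K * aMat v⁻¹ := by
        rw [hc]

end Aux

/-! ### The Bruhat-type set Ω -/

def TFOmega (L : AddSubgroup K) [CharP K 2] : Set (SL2 K) :=
  {g | (∃ s ∈ Tgen L, ∃ u ∈ L, g = diagMat s * aMat u) ∨
       (∃ s ∈ Tgen L, ∃ u ∈ L, ∃ v ∈ L, g = diagMat s * aMat u * wMat K * aMat v)}

section Omega

variable [CharP K 2] {L : AddSubgroup K}

lemma TF_L_inv (hvs : ∀ s t : K, t ∈ L → s ^ 2 * t ∈ L) {t : K} (ht : t ∈ L) :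
    t⁻¹ ∈ L := by
  by_cases h : t = 0
  · simpa [h] using L.zero_mem
  · have := hvs t⁻¹ t ht
    rwa [show (t⁻¹)^2 * t = t⁻¹ by field_simp] at this

lemma TF_mk0_mem {t : K} (ht : t ∈ L) (h0 : t ≠ 0) : Units.mk0 t h0 ∈ Tgen L :=
  Subgroup.subset_closure (by simpa using ht)

lemma TF_Om_one : (1 : SL2 K) ∈ TFOmega L :=
  Or.inl ⟨1, one_mem _, 0, L.zero_mem, by rw [TF_d_one, TF_a_zero, one_mul]⟩

lemma TF_Om_aMat {u : K} (hu : u ∈ L) : aMat u ∈ TFOmega L :=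
  Or.inl ⟨1, one_mem _, u, hu, by rw [TF_d_one, one_mul]⟩

lemma TF_Om_a (hvs : ∀ s t : K, t ∈ L → s ^ 2 * t ∈ L) {g : SL2 K} {x : K}
    (hg : g ∈ TFOmega L) (hx : x ∈ L) : g * aMat x ∈ TFOmega L := by
  rcases hg with ⟨s, hs, u, hu, rfl⟩ | ⟨s, hs, u, hu, v, hv, rfl⟩
  · exact Or.inl ⟨s, hs, u+x, L.add_mem hu hx, TF_E_Ba s u x⟩
  · exact Or.inr ⟨s, hs, u, hu, v+x, L.add_mem hv hx, TF_E_Ea s u v x⟩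

lemma TF_Om_d (hvs : ∀ s t : K, t ∈ L → s ^ 2 * t ∈ L) {g : SL2 K} {r : Kˣ}
    (hg : g ∈ TFOmega L) (hr : r ∈ Tgen L) : g * diagMat r ∈ TFOmega L := by
  rcases hg with ⟨s, hs, u, hu, rfl⟩ | ⟨s, hs, u, hu, v, hv, rfl⟩
  · exact Or.inl ⟨s*r, mul_mem hs hr, _, hvs _ _ hu, TF_E_Bd s r u⟩
  · exact Or.inr ⟨s*r⁻¹, mul_mem hs (inv_mem hr), _, hvs _ _ hu, _, hvs _ _ hv,
      TF_E_Ed s r u v⟩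

lemma TF_Om_w (hvs : ∀ s t : K, t ∈ L → s ^ 2 * t ∈ L) {g : SL2 K}
    (hg : g ∈ TFOmega L) : g * wMat K ∈ TFOmega L := by
  rcases hg with ⟨s, hs, u, hu, rfl⟩ | ⟨s, hs, u, hu, v, hv, rfl⟩
  · exact Or.inr ⟨s, hs, u, hu, 0, L.zero_mem, by rw [TF_a_zero, mul_one]⟩
  · by_cases hv0 : v = 0
    · subst hv0
      rw [TF_a_zero, mul_one, TF_E_Ew0]
      exact Or.inl ⟨s, hs, u, hu, rfl⟩
    · rw [TF_E_Ew s u v hv0]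
      refine Or.inr ⟨s * (Units.mk0 v hv0)⁻¹,
        mul_mem hs (inv_mem (TF_mk0_mem hv hv0)), v^2*u + v,
        L.add_mem (hvs v u hu) hv, v⁻¹, TF_L_inv hvs hv, rfl⟩

lemma TF_Om_b (hvs : ∀ s t : K, t ∈ L → s ^ 2 * t ∈ L) {g : SL2 K} {t : K}
    (hg : g ∈ TFOmega L) (ht : t ∈ L) : g * bMat t ∈ TFOmega L := by
  by_cases h0 : t = 0
  · subst h0; rw [TF_b_zero, mul_one]; exact hg
  · rw [TF_b_decomp t h0,
      show g * (aMat t⁻¹ * wMat K * diagMat (Units.mk0 t h0) * aMat t⁻¹)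
        = g * aMat t⁻¹ * wMat K * diagMat (Units.mk0 t h0) * aMat t⁻¹ by group]
    exact TF_Om_a hvs (TF_Om_d hvs (TF_Om_w hvs (TF_Om_a hvs hg (TF_L_inv hvs ht)))
      (TF_mk0_mem ht h0)) (TF_L_inv hvs ht)

lemma TF_Om_mul (hvs : ∀ s t : K, t ∈ L → s ^ 2 * t ∈ L) {g h : SL2 K}
    (hg : g ∈ TFOmega L) (hh : h ∈ TFOmega L) : g * h ∈ TFOmega L := by
  rcases hh with ⟨s, hs, u, hu, rfl⟩ | ⟨s, hs, u, hu, v, hv, rfl⟩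
  · rw [show g * (diagMat s * aMat u) = g * diagMat s * aMat u by group]
    exact TF_Om_a hvs (TF_Om_d hvs hg hs) hu
  · rw [show g * (diagMat s * aMat u * wMat K * aMat v)
        = g * diagMat s * aMat u * wMat K * aMat v by group]
    exact TF_Om_a hvs (TF_Om_w hvs (TF_Om_a hvs (TF_Om_d hvs hg hs) hu)) hv

lemma TF_Om_inv (hvs : ∀ s t : K, t ∈ L → s ^ 2 * t ∈ L) {g : SL2 K}
    (hg : g ∈ TFOmega L) : g⁻¹ ∈ TFOmega L := by
  rcases hg with ⟨s, hs, u, hu, rfl⟩ | ⟨s, hs, u, hu, v, hv, rfl⟩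
  · have h1 : (diagMat s * aMat u) * (aMat u * diagMat s⁻¹) = 1 := by
      simp only [mul_assoc]
      rw [← mul_assoc (aMat u) (aMat u), TF_a_self, one_mul, TF_d_mul]
      simp [TF_d_one]
    rw [inv_eq_of_mul_eq_one_right h1]
    exact TF_Om_d hvs (TF_Om_aMat hu) (inv_mem hs)
  · have h1 : (diagMat s * aMat u * wMat K * aMat v)
        * (aMat v * wMat K * aMat u * diagMat s⁻¹) = 1 := by
      simp only [mul_assoc]
      rw [← mul_assoc (aMat v) (aMat v), TF_a_self, one_mul,
        ← mul_assoc (wMat K) (wMat K), TF_w_w, one_mul,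
        ← mul_assoc (aMat u) (aMat u), TF_a_self, one_mul, TF_d_mul]
      simp [TF_d_one]
    rw [inv_eq_of_mul_eq_one_right h1]
    exact TF_Om_d hvs (TF_Om_a hvs (TF_Om_w hvs (TF_Om_aMat hv)) hu) (inv_mem hs)

lemma TF_SL2L_sub_Om (hvs : ∀ s t : K, t ∈ L → s ^ 2 * t ∈ L) {g : SL2 K}
    (hg : g ∈ SL2L L) : g ∈ TFOmega L := by
  refine Subgroup.closure_induction (p := fun x _ => x ∈ TFOmega L)
    ?_ TF_Om_one (fun x y _ _ hx hy => TF_Om_mul hvs hx hy)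
    (fun x _ hx => TF_Om_inv hvs hx) hg
  rintro x (⟨t, ht, rfl⟩ | ⟨t, ht, rfl⟩)
  · exact TF_Om_aMat ht
  · rw [show bMat t = 1 * bMat t by rw [one_mul]]
    exact TF_Om_b hvs TF_Om_one ht

lemma TF_aMat_mem {t : K} (ht : t ∈ L) : aMat t ∈ SL2L L :=
  Subgroup.subset_closure (Or.inl ⟨t, ht, rfl⟩)

lemma TF_bMat_mem {t : K} (ht : t ∈ L) : bMat t ∈ SL2L L :=
  Subgroup.subset_closure (Or.inr ⟨t, ht, rfl⟩)

lemma TF_wMat_mem (h1 : (1:K) ∈ L) : wMat K ∈ SL2L L := by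
  rw [TF_w_decomp]
  exact mul_mem (mul_mem (TF_aMat_mem h1) (by simpa using TF_bMat_mem h1)) (TF_aMat_mem h1)

lemma TF_diag_mem (hvs : ∀ s t : K, t ∈ L → s ^ 2 * t ∈ L) (h1 : (1:K) ∈ L)
    {x : Kˣ} (hx : x ∈ Tgen L) : diagMat x ∈ SL2L L := by
  refine Subgroup.closure_induction (p := fun y _ => diagMat y ∈ SL2L L)
    ?_ (by show diagMat (1:Kˣ) ∈ SL2L L; rw [TF_d_one]; exact one_mem _)
    (fun y z _ _ hy hz => by
      show diagMat (y*z) ∈ SL2L L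
      rw [← TF_d_mul]; exact mul_mem hy hz)
    (fun y _ hy => by
      show diagMat y⁻¹ ∈ SL2L L
      rw [← TF_d_inv]; exact inv_mem hy) hx
  intro y hy
  have hy0 : (y:K) ≠ 0 := Units.ne_zero y
  have hn : aMat (y:K) * bMat ((y:K))⁻¹ * aMat (y:K) ∈ SL2L L :=
    mul_mem (mul_mem (TF_aMat_mem hy) (TF_bMat_mem (TF_L_inv hvs hy))) (TF_aMat_mem hy)
  rw [TF_n (y:K) hy0] at hn
  have hd : diagMat (Units.mk0 (y:K) hy0)⁻¹ ∈ SL2L L := by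
    have := mul_mem (inv_mem (TF_wMat_mem h1)) hn
    rwa [← mul_assoc, inv_mul_cancel, one_mul] at this
  have : diagMat (Units.mk0 (y:K) hy0) ∈ SL2L L := by
    have := inv_mem hd
    rwa [TF_d_inv, inv_inv] at this
  rwa [show Units.mk0 (y:K) hy0 = y from Units.ext rfl] at this

end Omega

/-- In `SL₂(L)` the root group and the torus are self-centralizing on nontrivial
elements: for nonzero `t ∈ L` the centralizer of `a(t)` in `SL₂(L)` is `A`, and for
`s ≠ 1` in the subgroup of `Kˣ` generated by `L \ {0}` the centralizer of `diag(s)`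
in `SL₂(L)` is `T(L)`. -/
theorem centralizers_in_SL2L
    [CharP K 2] (himperf : ¬ Function.Surjective fun x : K => x ^ 2)
    (L : AddSubgroup K) (hsq : ∀ x : K, x ^ 2 ∈ L)
    (hvs : ∀ s t : K, t ∈ L → s ^ 2 * t ∈ L) :
    (∀ t : K, t ∈ L → t ≠ 0 →
        {g : SL2 K | g ∈ SL2L L ∧ g * aMat t = aMat t * g} = setA L) ∧
      ∀ s : Kˣ, s ∈ Tgen L → s ≠ 1 →
        {g : SL2 K | g ∈ SL2L L ∧ g * diagMat s = diagMat s * g} = setTL L := by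
  have h1L : (1:K) ∈ L := by simpa using hsq 1
  constructor
  · -- centralizer of a(t)
    intro t ht ht0
    ext g
    simp only [Set.mem_setOf_eq]
    constructor
    · rintro ⟨hmem, hcomm⟩
      rcases TF_SL2L_sub_Om hvs hmem with ⟨s, hs, u, hu, rfl⟩ | ⟨s, hs, u, hu, v, hv, rfl⟩
      · rw [TF_E_Ba, TF_E_aB] at hcomm
        have := TF_a_inj (mul_left_cancel hcomm)
        have hts : (s:K)⁻¹^2 * t = 1 * t := by
          rw [one_mul]
          have h2 : u + t = (s:K)⁻¹^2 * t + u := this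
          rw [add_comm ((s:K)⁻¹^2 * t) u] at h2
          exact (add_left_cancel h2).symm
        have hs1 : (s:K)⁻¹ = 1 := TF_sq_one (mul_right_cancel₀ ht0 hts)
        have : s = 1 := by
          have : s⁻¹ = 1 := Units.ext (by simpa using hs1)
          simpa using congrArg (·⁻¹) this
        subst this
        rw [TF_d_one, one_mul]
        exact ⟨u, hu, rfl⟩
      · exfalso
        rw [TF_E_Ea, TF_E_aE] at hcomm
        have := congrArg (fun m : SL2 K => (m : Matrix (Fin 2) (Fin 2) K) 1 1) hcomm
        simp only [TF_Ecoe, Matrix.cons_val', Matrix.cons_val_one, Matrix.head_cons,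
          Matrix.head_fin_const, Matrix.cons_val_fin_one, Matrix.empty_val'] at this
        have hne : ((s⁻¹:Kˣ):K) ≠ 0 := Units.ne_zero _
        have : v + t = v := mul_left_cancel₀ hne this
        exact ht0 (add_eq_left.mp this)
    · rintro ⟨u, hu, rfl⟩
      exact ⟨TF_aMat_mem hu, by rw [TF_a_mul, TF_a_mul, add_comm]⟩
  · -- centralizer of diag(s)
    intro s hsT hs1
    ext g
    simp only [Set.mem_setOf_eq]
    constructor
    · rintro ⟨hmem, hcomm⟩
      rcases TF_SL2L_sub_Om hvs hmem with ⟨s', hs', u, hu, rfl⟩ | ⟨s', hs', u, hu, v, hv, rfl⟩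
      · rw [TF_E_Bd, TF_E_dB, mul_comm s s'] at hcomm
        have hcan := TF_a_inj (mul_left_cancel hcomm)
        by_cases hu0 : u = 0
        · subst hu0
          rw [TF_a_zero, mul_one]
          exact ⟨s', hs', rfl⟩
        · exfalso
          have : (s:K)⁻¹^2 = 1 := by
            have : (s:K)⁻¹^2 * u = 1 * u := by rw [one_mul, hcan]
            exact mul_right_cancel₀ hu0 this
          exact hs1 (Units.ext (by simpa using
            (inv_eq_one.mp (Units.ext (show ((s⁻¹:Kˣ):K) = ((1:Kˣ):K) by
              simpa using TF_sq_one this)))))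
      · exfalso
        rw [TF_E_Ed, TF_E_dE] at hcomm
        have := congrArg (fun m : SL2 K => (m : Matrix (Fin 2) (Fin 2) K) 1 0) hcomm
        simp only [TF_Ecoe, Matrix.cons_val', Matrix.cons_val_one, Matrix.head_cons,
          Matrix.head_fin_const, Matrix.cons_val_fin_one, Matrix.empty_val',
          Matrix.cons_val_zero] at this
        -- this : (((s' * s⁻¹)⁻¹ : Kˣ) : K) = (((s * s')⁻¹ : Kˣ) : K)
        have hu2 : (s' * s⁻¹)⁻¹ = (s * s')⁻¹ := Units.ext this
        have hss : s = s⁻¹ := by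
          rw [_root_.mul_inv_rev, inv_inv] at hu2
          rw [_root_.mul_inv_rev] at hu2
          -- hu2 : s * s'⁻¹ = s'⁻¹ * s⁻¹
          have h3 : s * s'⁻¹ = s⁻¹ * s'⁻¹ := by rw [hu2, mul_comm]
          exact mul_right_cancel h3
        have : (s:K)^2 = 1 := by
          have := congrArg (fun u : Kˣ => ((u:K) * (s:K))) hss
          simpa [sq, Units.val_inv_eq_inv_val, inv_mul_cancel₀ (Units.ne_zero s)] using this
        exact hs1 (Units.ext (by simpa using TF_sq_one this))
    · rintro ⟨s', hs', rfl⟩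
      exact ⟨TF_diag_mem hvs h1L hs', by rw [TF_d_mul, TF_d_mul, mul_comm]⟩

end
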